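/- Let A be a splitting class. Then there exists a p-morphism from the Kripke frame (A/≡_T, ≤_T) onto the full infinite binary tree 2^{<ω} ordered by the prefix relation. -/

import Mathlib

/-- `RecursiveIn O f` means the partial function `f : ℕ →. ℕ` is partial recursive
relative to the oracle `O : ℕ →. ℕ`. -/
inductive RelRecursiveIn (O : ℕ →. ℕ) : (ℕ →. ℕ) → Prop
  | oracle : RelRecursiveIn O O
  | zero : RelRecursiveIn O (pure 0)
  | succ : RelRecursiveIn O Nat.succ
  | left : RelRecursiveIn O fun n => (Nat.unpair n).1
  | right : RelRecursiveIn O fun n => (Nat.unpair n).2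
  | pair {f g : ℕ →. ℕ} : RelRecursiveIn O f → RelRecursiveIn O g →
      RelRecursiveIn O fun n => Nat.pair <$> f n <*> g n
  | comp {f g : ℕ →. ℕ} : RelRecursiveIn O f → RelRecursiveIn O g →
      RelRecursiveIn O fun n => g n >>= f
  | prec {f g : ℕ →. ℕ} : RelRecursiveIn O f → RelRecursiveIn O g →
      RelRecursiveIn O (Nat.unpaired fun a n =>
        n.rec (f a) fun y IH => do let i ← IH; g (Nat.pair a (Nat.pair y i)))
  | rfind {f : ℕ →. ℕ} : RelRecursiveIn O f →
      RelRecursiveIn O fun a => Nat.rfind fun n => (fun m => m = 0) <$> f (Nat.pair a n)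

/-- Turing reducibility on total functions in Baire space. -/
def TuringLE (f g : ℕ → ℕ) : Prop := RelRecursiveIn (↑g) (↑f)

/-- Turing equivalence. -/
def TuringEquiv (f g : ℕ → ℕ) : Prop := TuringLE f g ∧ TuringLE g f

/-- The join `f ⊕ g` of two elements of Baire space. -/
def fjoin (f g : ℕ → ℕ) : ℕ → ℕ := fun n => if n % 2 = 0 then f (n / 2) else g (n / 2)

/-- Relativization is transitive. -/
theorem RelRecursiveIn.trans' {O f g : ℕ →. ℕ}
    (hf : RelRecursiveIn g f) (hg : RelRecursiveIn O g) : RelRecursiveIn O f := by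
  induction hf with
  | oracle => exact hg
  | zero => exact .zero
  | succ => exact .succ
  | left => exact .left
  | right => exact .right
  | pair _ _ ih₁ ih₂ => exact .pair ih₁ ih₂
  | comp _ _ ih₁ ih₂ => exact .comp ih₁ ih₂
  | prec _ _ ih₁ ih₂ => exact .prec ih₁ ih₂
  | rfind _ ih => exact .rfind ih

/-- Turing equivalence as a setoid on the members of a mass problem `A`. -/
def turingSetoid (A : Set (ℕ → ℕ)) : Setoid {f : ℕ → ℕ // f ∈ A} where
  r f g := TuringLE f.1 g.1 ∧ TuringLE g.1 f.1
  iseqv := by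
    refine ⟨fun f => ⟨.oracle, .oracle⟩, fun h => ⟨h.2, h.1⟩, fun h₁ h₂ => ⟨?_, ?_⟩⟩
    · exact RelRecursiveIn.trans' h₁.1 h₂.1
    · exact RelRecursiveIn.trans' h₂.2 h₁.2

/-- The Kripke frame `A/≡_T`: the quotient of `A` by Turing equivalence. -/
def TDegrees (A : Set (ℕ → ℕ)) := Quotient (turingSetoid A)

/-- The ordering of `A/≡_T` induced by Turing reducibility. -/
def qle (A : Set (ℕ → ℕ)) : TDegrees A → TDegrees A → Prop :=
  Quotient.lift₂ (fun f g => TuringLE f.1 g.1) (by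
    rintro a b a' b' ⟨haa', ha'a⟩ ⟨hbb', hb'b⟩
    refine propext ⟨fun h => ?_, fun h => ?_⟩
    · exact RelRecursiveIn.trans' (RelRecursiveIn.trans' ha'a h) hbb'
    · exact RelRecursiveIn.trans' (RelRecursiveIn.trans' haa' h) hb'b)


def SplittingClass (A : Set (ℕ → ℕ)) : Prop :=
  A.Nonempty ∧ A.Countable ∧ (∀ f ∈ A, ∀ g : ℕ → ℕ, TuringLE g f → g ∈ A) ∧
    ∀ f ∈ A, ∀ B : Set (ℕ → ℕ), B.Finite → B ⊆ {g | g ∈ A ∧ ¬ TuringLE g f} →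
      ∃ h₀ ∈ A, ∃ h₁ ∈ A, TuringLE f h₀ ∧ TuringLE f h₁ ∧ fjoin h₀ h₁ ∉ A ∧
        ∀ g ∈ B, fjoin g h₀ ∉ A ∧ fjoin g h₁ ∉ A



namespace SplitPM

theorem rec_of_partrec {O f} (h : Nat.Partrec f) : RelRecursiveIn O f := by
  induction h with
  | zero => exact .zero
  | succ => exact .succ
  | left => exact .left
  | right => exact .right
  | pair _ _ ih₁ ih₂ => exact .pair ih₁ ih₂
  | comp _ _ ih₁ ih₂ => exact .comp ih₁ ih₂
  | prec _ _ ih₁ ih₂ => exact .prec ih₁ ih₂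
  | rfind _ ih => exact .rfind ih

theorem rec_of_eq {O : ℕ →. ℕ} {f g : ℕ →. ℕ} (h : RelRecursiveIn O f) (H : ∀ n, f n = g n) :
    RelRecursiveIn O g := (funext H : f = g) ▸ h

theorem rec_of_computable {O : ℕ →. ℕ} {f : ℕ → ℕ} (h : Computable f) :
    RelRecursiveIn O ↑f := rec_of_partrec (Partrec.nat_iff.1 h.partrec)

theorem rec_totalComp {O : ℕ →. ℕ} {f g : ℕ → ℕ} (hf : RelRecursiveIn O ↑f)
    (hg : RelRecursiveIn O ↑g) : RelRecursiveIn O ↑(fun n => f (g n)) :=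
  rec_of_eq (hf.comp hg) (by intro n; simp [PFun.coe_val]; exact Part.bind_some _ _)

theorem rec_totalPair {O : ℕ →. ℕ} {f g : ℕ → ℕ} (hf : RelRecursiveIn O ↑f)
    (hg : RelRecursiveIn O ↑g) : RelRecursiveIn O ↑(fun n => Nat.pair (f n) (g n)) :=
  rec_of_eq (hf.pair hg) (by intro n; simp [PFun.coe_val, Seq.seq])

theorem TLE.refl (f : ℕ → ℕ) : TuringLE f f := .oracle
theorem TLE.trans {f g h : ℕ → ℕ} (h₁ : TuringLE f g) (h₂ : TuringLE g h) : TuringLE f h :=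
  RelRecursiveIn.trans' h₁ h₂

def zer : ℕ → ℕ := fun _ => 0

theorem zer_le (f : ℕ → ℕ) : TuringLE zer f := by
  have h : ((zer : ℕ → ℕ) : ℕ →. ℕ) = (pure 0 : ℕ →. ℕ) := by funext n; rfl
  show RelRecursiveIn _ _
  rw [h]; exact .zero

theorem TLE.join {a b c : ℕ → ℕ} (ha : TuringLE a c) (hb : TuringLE b c) :
    TuringLE (fjoin a b) c := by
  have hdiv : RelRecursiveIn (↑c) ↑(fun n : ℕ => n / 2) :=
    rec_of_computable (Primrec.to_comp (Primrec.nat_div.comp Primrec.id (Primrec.const 2)))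
  have h1 : RelRecursiveIn (↑c) ↑(fun n => a (n / 2)) := rec_totalComp ha hdiv
  have h2 : RelRecursiveIn (↑c) ↑(fun n => b (n / 2)) := rec_totalComp hb hdiv
  have h3 : RelRecursiveIn (↑c) ↑(fun n => Nat.pair (Nat.pair (a (n/2)) (b (n/2))) n) :=
    rec_totalPair (rec_totalPair h1 h2) (rec_of_computable Computable.id)
  have hk : Computable (fun m : ℕ => if (Nat.unpair m).2 % 2 = 0
      then (Nat.unpair (Nat.unpair m).1).1 else (Nat.unpair (Nat.unpair m).1).2) := by
    have hm : Primrec (fun m : ℕ => (Nat.unpair m).2 % 2) :=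
      Primrec.nat_mod.comp (Primrec.snd.comp Primrec.unpair) (Primrec.const 2)
    have hp : PrimrecPred (fun m : ℕ => (Nat.unpair m).2 % 2 = 0) :=
      PrimrecRel.comp Primrec.eq hm (Primrec.const 0)
    exact Primrec.to_comp (Primrec.ite hp
      (Primrec.fst.comp (Primrec.unpair.comp (Primrec.fst.comp Primrec.unpair)))
      (Primrec.snd.comp (Primrec.unpair.comp (Primrec.fst.comp Primrec.unpair))))
  refine rec_of_eq (rec_totalComp (rec_of_computable (O := ↑c) hk) h3) ?_
  intro n
  simp only [PFun.coe_val, Nat.unpair_pair, fjoin, Part.some_inj]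


/-- Context packaging a splitting class with an enumeration. -/
structure Ctx where
  A : Set (ℕ → ℕ)
  F : ℕ → ℕ → ℕ
  hFA : ∀ n, F n ∈ A
  hsurj : ∀ f ∈ A, ∃ n, F n = f
  hdc : ∀ f ∈ A, ∀ g : ℕ → ℕ, TuringLE g f → g ∈ A
  hzer : zer ∈ A
  hsplit : ∀ f ∈ A, ∀ B : Set (ℕ → ℕ), B.Finite → B ⊆ {g | g ∈ A ∧ ¬ TuringLE g f} →
      ∃ h₀ ∈ A, ∃ h₁ ∈ A, TuringLE f h₀ ∧ TuringLE f h₁ ∧ fjoin h₀ h₁ ∉ A ∧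
        ∀ g ∈ B, fjoin g h₀ ∉ A ∧ fjoin g h₁ ∉ A

abbrev Node := (ℕ → ℕ) × List Bool

noncomputable def best (l : List (List Bool)) : List Bool :=
  l.foldr (fun a b => if b.length ≤ a.length then a else b) []

theorem best_length (l : List (List Bool)) : ∀ a ∈ l, a.length ≤ (best l).length := by
  induction l with
  | nil => simp
  | cons x xs ih =>
    intro a ha
    rcases List.mem_cons.1 ha with rfl | ha
    · show a.length ≤ (if (best xs).length ≤ a.length then a else best xs).length
      split <;> omega
    · have := ih a ha
      show a.length ≤ (if (best xs).length ≤ x.length then x else best xs).length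
      split <;> omega

theorem best_mem (l : List (List Bool)) : best l ∈ l ∨ best l = [] := by
  induction l with
  | nil => simp [best]
  | cons x xs ih =>
    show (if (best xs).length ≤ x.length then x else best xs) ∈ x :: xs ∨
      (if (best xs).length ≤ x.length then x else best xs) = []
    split
    · exact Or.inl List.mem_cons_self
    · rcases ih with h | h
      · exact Or.inl (List.mem_cons_of_mem _ h)
      · exact Or.inr h

open Classical in
noncomputable def tagOf (L : List Node) (f : ℕ → ℕ) : List Bool :=
  best ((L.filter (fun p => decide (TuringLE p.1 f))).map Prod.snd)

variable (C : Ctx)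

def Bset (L : List Node) (n : ℕ) : Set (ℕ → ℕ) :=
  {g | (g ∈ C.A ∧ ¬ TuringLE g (C.F n)) ∧ ((∃ τ, (g, τ) ∈ L) ∨ ∃ j ≤ n, g = C.F j)}

theorem Bset_fin (L : List Node) (n : ℕ) : (Bset C L n).Finite := by
  apply Set.Finite.subset
    (((L.finite_toSet).image Prod.fst).union ((Set.finite_Iic n).image C.F))
  rintro g ⟨-, h | ⟨j, hj, rfl⟩⟩
  · obtain ⟨τ, hτ⟩ := h
    exact Or.inl ⟨(g, τ), hτ, rfl⟩
  · exact Or.inr ⟨j, hj, rfl⟩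

theorem key (L : List Node) (n : ℕ) : ∃ p : (ℕ → ℕ) × (ℕ → ℕ),
    p.1 ∈ C.A ∧ p.2 ∈ C.A ∧ TuringLE (C.F n) p.1 ∧ TuringLE (C.F n) p.2 ∧
    fjoin p.1 p.2 ∉ C.A ∧ ∀ g ∈ Bset C L n, fjoin g p.1 ∉ C.A ∧ fjoin g p.2 ∉ C.A := by
  obtain ⟨h₀, h₀A, h₁, h₁A, l0, l1, hj, hB⟩ :=
    C.hsplit (C.F n) (C.hFA n) (Bset C L n) (Bset_fin C L n) (fun g hg => ⟨hg.1.1, hg.1.2⟩)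
  exact ⟨(h₀, h₁), h₀A, h₁A, l0, l1, hj, hB⟩

noncomputable def S : ℕ → List Node
  | 0 => [(zer, [])]
  | n + 1 =>
    S n ++ [((Classical.choose (key C (S n) n)).1, tagOf (S n) (C.F n) ++ [false]),
            ((Classical.choose (key C (S n) n)).2, tagOf (S n) (C.F n) ++ [true])]

noncomputable def qq (n : ℕ) : (ℕ → ℕ) × (ℕ → ℕ) := Classical.choose (key C (S C n) n)

noncomputable def sg (n : ℕ) : List Bool := tagOf (S C n) (C.F n)

noncomputable def nd (n : ℕ) (b : Bool) : Node :=
  (if b then (qq C n).2 else (qq C n).1, sg C n ++ [b])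

theorem qqspec (n : ℕ) :
    (qq C n).1 ∈ C.A ∧ (qq C n).2 ∈ C.A ∧ TuringLE (C.F n) (qq C n).1 ∧
    TuringLE (C.F n) (qq C n).2 ∧ fjoin (qq C n).1 (qq C n).2 ∉ C.A ∧
    ∀ g ∈ Bset C (S C n) n, fjoin g (qq C n).1 ∉ C.A ∧ fjoin g (qq C n).2 ∉ C.A :=
  Classical.choose_spec (key C (S C n) n)

theorem S_succ (n : ℕ) : S C (n + 1) = S C n ++ [nd C n false, nd C n true] := rfl

theorem root_mem (n : ℕ) : ((zer, []) : Node) ∈ S C n := by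
  induction n with
  | zero => simp [S]
  | succ n ih => rw [S_succ]; exact List.mem_append_left _ ih

theorem S_mono {m n : ℕ} (h : m ≤ n) : ∀ p ∈ S C m, p ∈ S C n := by
  induction n with
  | zero => intro p hp; exact (Nat.le_zero.1 h) ▸ hp
  | succ n ih =>
    intro p hp
    rcases Nat.le_succ_iff_eq_or_le.mp h with rfl | h'
    · exact hp
    · rw [S_succ]; exact List.mem_append_left _ (ih h' p hp)

theorem nd_mem {m n : ℕ} (h : m < n) (b : Bool) : nd C m b ∈ S C n := by
  refine S_mono C h _ ?_
  rw [S_succ]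
  cases b <;> simp

theorem mem_S_elim {p : Node} {n : ℕ} (h : p ∈ S C n) :
    p = (zer, []) ∨ ∃ m < n, ∃ b, p = nd C m b := by
  induction n with
  | zero => simp [S] at h; exact Or.inl h
  | succ n ih =>
    rw [S_succ] at h
    rcases List.mem_append.1 h with h | h
    · rcases ih h with h | ⟨m, hm, b, hb⟩
      · exact Or.inl h
      · exact Or.inr ⟨m, Nat.lt_succ_of_lt hm, b, hb⟩
    · simp at h
      rcases h with rfl | rfl
      · exact Or.inr ⟨n, Nat.lt_succ_self n, false, rfl⟩
      · exact Or.inr ⟨n, Nat.lt_succ_self n, true, rfl⟩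

theorem memA {p : Node} {n : ℕ} (h : p ∈ S C n) : p.1 ∈ C.A := by
  rcases mem_S_elim C h with rfl | ⟨m, _, b, rfl⟩
  · exact C.hzer
  · obtain ⟨h0, h1, -⟩ := qqspec C m
    cases b <;> simpa [nd]

theorem ndA (n : ℕ) (b : Bool) : (nd C n b).1 ∈ C.A := by
  obtain ⟨h0, h1, -⟩ := qqspec C n
  cases b <;> simpa [nd]

theorem F_le_nd (n : ℕ) (b : Bool) : TuringLE (C.F n) (nd C n b).1 := by
  obtain ⟨-, -, h0, h1, -⟩ := qqspec C n
  cases b <;> simpa [nd]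

theorem join_not_ub {e e' c : ℕ → ℕ} (hj : fjoin e e' ∉ C.A) (hc : c ∈ C.A)
    (h1 : TuringLE e c) (h2 : TuringLE e' c) : False :=
  hj (C.hdc c hc _ (TLE.join h1 h2))

theorem nd_not_le_F_self (n : ℕ) (b : Bool) : ¬ TuringLE (nd C n b).1 (C.F n) := by
  obtain ⟨h0A, h1A, l0, l1, hj, -⟩ := qqspec C n
  intro h
  cases b
  · exact join_not_ub C hj h1A (TLE.trans (by simpa [nd] using h) l1) (TLE.refl _)
  · exact join_not_ub C hj h0A (TLE.refl _) (TLE.trans (by simpa [nd] using h) l0)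

theorem nd_B_noub {n : ℕ} {g : ℕ → ℕ} (hg : g ∈ Bset C (S C n) n) (b : Bool)
    {c : ℕ → ℕ} (hc : c ∈ C.A) (h1 : TuringLE g c) (h2 : TuringLE (nd C n b).1 c) : False := by
  obtain ⟨-, -, -, -, -, hB⟩ := qqspec C n
  obtain ⟨hB0, hB1⟩ := hB g hg
  cases b
  · exact join_not_ub C hB0 hc h1 (by simpa [nd] using h2)
  · exact join_not_ub C hB1 hc h1 (by simpa [nd] using h2)

theorem nd_not_le_old {n : ℕ} {b : Bool} {p : Node} (hp : p ∈ S C n) :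
    ¬ TuringLE (nd C n b).1 p.1 := by
  intro h
  by_cases hle : TuringLE p.1 (C.F n)
  · exact nd_not_le_F_self C n b (TLE.trans h hle)
  · have hB : p.1 ∈ Bset C (S C n) n :=
      ⟨⟨memA C hp, hle⟩, Or.inl ⟨p.2, by simpa using hp⟩⟩
    exact nd_B_noub C hB b (memA C hp) (TLE.refl _) h

theorem nd_not_le_F {n : ℕ} {b : Bool} {j : ℕ} (hj : j ≤ n) :
    ¬ TuringLE (nd C n b).1 (C.F j) := by
  intro h
  by_cases hle : TuringLE (C.F j) (C.F n)
  · exact nd_not_le_F_self C n b (TLE.trans h hle)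
  · have hB : C.F j ∈ Bset C (S C n) n :=
      ⟨⟨C.hFA j, hle⟩, Or.inr ⟨j, hj, rfl⟩⟩
    exact nd_B_noub C hB b (C.hFA j) (TLE.refl _) h

theorem sig_spec (n : ℕ)
    (Hch : ∀ p ∈ S C n, ∀ p' ∈ S C n, TuringLE p.1 (C.F n) → TuringLE p'.1 (C.F n) →
      p.2 <+: p'.2 ∨ p'.2 <+: p.2) :
    ∀ p ∈ S C n, TuringLE p.1 (C.F n) → p.2 <+: sg C n := by
  intro p hp hle
  classical
  have hpl : p.2 ∈ (List.filter (fun p : Node => decide (TuringLE p.1 (C.F n))) (S C n)).map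
      Prod.snd :=
    List.mem_map.2 ⟨p, List.mem_filter.2 ⟨hp, decide_eq_true hle⟩, rfl⟩
  have hlen : p.2.length ≤ (sg C n).length := best_length _ _ hpl
  rcases best_mem ((List.filter (fun p : Node => decide (TuringLE p.1 (C.F n))) (S C n)).map
      Prod.snd) with hb | hb
  · obtain ⟨p', hp'f, hp'2⟩ := List.mem_map.1 hb
    have hp'S := (List.mem_filter.1 hp'f).1
    have hp'le : TuringLE p'.1 (C.F n) := of_decide_eq_true (List.mem_filter.1 hp'f).2
    have hsg : sg C n = p'.2 := hp'2.symm
    rcases Hch p hp p' hp'S hle hp'le with h | h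
    · rw [hsg]; exact h
    · rw [hsg] at hlen ⊢
      exact (h.eq_of_length_le hlen) ▸ List.prefix_refl _
  · have : (sg C n).length = 0 := by rw [show sg C n = best _ from rfl, hb]; rfl
    have : p.2 = [] := List.length_eq_zero_iff.1 (Nat.le_zero.1 (this ▸ hlen))
    rw [this]; exact List.nil_prefix

theorem sig_mem (n : ℕ) : ∃ p ∈ S C n, TuringLE p.1 (C.F n) ∧ p.2 = sg C n := by
  classical
  rcases best_mem ((List.filter (fun p : Node => decide (TuringLE p.1 (C.F n))) (S C n)).map
      Prod.snd) with hb | hb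
  · obtain ⟨p', hp'f, hp'2⟩ := List.mem_map.1 hb
    exact ⟨p', (List.mem_filter.1 hp'f).1,
      of_decide_eq_true (List.mem_filter.1 hp'f).2, hp'2⟩
  · refine ⟨(zer, []), root_mem C n, zer_le _, ?_⟩
    show ([] : List Bool) = best _
    rw [hb]

theorem chainInv (n : ℕ) : ∀ p ∈ S C n, ∀ p' ∈ S C n, ¬ p.2 <+: p'.2 → ¬ p'.2 <+: p.2 →
    ∀ c ∈ C.A, TuringLE p.1 c → TuringLE p'.1 c → False := by
  induction n with
  | zero =>
    intro p hp p' hp' h1 h2 c hc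
    simp [S] at hp hp'
    rw [hp, hp'] at h1
    exact absurd (List.prefix_refl _) h1
  | succ n ih =>
    -- helper: old node versus new node
    have Hch : ∀ p ∈ S C n, ∀ p' ∈ S C n, TuringLE p.1 (C.F n) → TuringLE p'.1 (C.F n) →
        p.2 <+: p'.2 ∨ p'.2 <+: p.2 := by
      intro p hp p' hp' hle hle'
      by_contra hcon
      push_neg at hcon
      exact ih p hp p' hp' hcon.1 hcon.2 (C.F n) (C.hFA n) hle hle'
    have Hmax := sig_spec C n Hch
    have Hold_new : ∀ p ∈ S C n, ∀ b : Bool, ¬ p.2 <+: (nd C n b).2 →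
        ∀ c ∈ C.A, TuringLE p.1 c → TuringLE (nd C n b).1 c → False := by
      intro p hp b hpre c hc h1 h2
      by_cases hle : TuringLE p.1 (C.F n)
      · refine hpre ?_
        have : (nd C n b).2 = sg C n ++ [b] := rfl
        rw [this]
        exact (Hmax p hp hle).trans (List.prefix_append _ _)
      · have hB : p.1 ∈ Bset C (S C n) n :=
          ⟨⟨memA C hp, hle⟩, Or.inl ⟨p.2, by simpa using hp⟩⟩
        exact nd_B_noub C hB b hc h1 h2
    intro p hp p' hp' h1 h2 c hc hle hle'
    rw [S_succ] at hp hp'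
    have hnd : ∀ x : Node, x ∈ [nd C n false, nd C n true] → ∃ b, x = nd C n b := by
      intro x hx; simp at hx
      rcases hx with rfl | rfl
      exacts [⟨false, rfl⟩, ⟨true, rfl⟩]
    rcases List.mem_append.1 hp with hpo | hpn <;> rcases List.mem_append.1 hp' with hp'o | hp'n
    · exact ih p hpo p' hp'o h1 h2 c hc hle hle'
    · obtain ⟨b, rfl⟩ := hnd p' hp'n
      exact Hold_new p hpo b h1 c hc hle hle'
    · obtain ⟨b, rfl⟩ := hnd p hpn
      exact Hold_new p' hp'o b h2 c hc hle' hle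
    · obtain ⟨b, rfl⟩ := hnd p hpn
      obtain ⟨b', rfl⟩ := hnd p' hp'n
      obtain ⟨h0A, h1A, l0, l1, hj, -⟩ := qqspec C n
      cases b <;> cases b'
      · exact h1 (List.prefix_refl _)
      · exact join_not_ub C hj hc (by simpa [nd] using hle) (by simpa [nd] using hle')
      · exact join_not_ub C hj hc (by simpa [nd] using hle') (by simpa [nd] using hle)
      · exact h1 (List.prefix_refl _)

theorem tags_comp {n : ℕ} {c : ℕ → ℕ} (hc : c ∈ C.A) {p p' : Node} (hp : p ∈ S C n)
    (hp' : p' ∈ S C n) (h1 : TuringLE p.1 c) (h2 : TuringLE p'.1 c) :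
    p.2 <+: p'.2 ∨ p'.2 <+: p.2 := by
  by_contra hcon
  push_neg at hcon
  exact chainInv C n p hp p' hp' hcon.1 hcon.2 c hc h1 h2

theorem tag_le_sig {n : ℕ} {p : Node} (hp : p ∈ S C n) (h : TuringLE p.1 (C.F n)) :
    p.2 <+: sg C n :=
  sig_spec C n (fun p hp p' hp' hle hle' => tags_comp C (C.hFA n) hp hp' hle hle') p hp h

theorem stable {m n : ℕ} {p : Node} (hp : p ∈ S C n) (h : TuringLE p.1 (C.F m)) :
    p ∈ S C m := by
  rcases mem_S_elim C hp with rfl | ⟨k, hk, b, rfl⟩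
  · exact root_mem C m
  · rcases Nat.lt_or_ge k m with hkm | hkm
    · exact nd_mem C hkm b
    · exact absurd h (nd_not_le_F C hkm)

theorem global_max {m n : ℕ} {p : Node} (hp : p ∈ S C n) (h : TuringLE p.1 (C.F m)) :
    p.2 <+: sg C m :=
  tag_le_sig C (stable C hp h) h

theorem nd_max {n : ℕ} {b : Bool} {p : Node} {m' : ℕ} (hp : p ∈ S C m')
    (h : TuringLE p.1 (nd C n b).1) : p.2 <+: sg C n ++ [b] := by
  rcases mem_S_elim C hp with rfl | ⟨k, hk, b', rfl⟩
  · exact List.nil_prefix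
  · rcases Nat.lt_trichotomy k n with hkn | rfl | hkn
    · -- older node
      by_cases hle : TuringLE (nd C k b').1 (C.F n)
      · exact (tag_le_sig C (nd_mem C hkn b') hle).trans (List.prefix_append _ _)
      · have hB : (nd C k b').1 ∈ Bset C (S C n) n :=
          ⟨⟨ndA C k b', hle⟩, Or.inl ⟨(nd C k b').2, by simpa using nd_mem C hkn b'⟩⟩
        exact (nd_B_noub C hB b (ndA C n b) h (TLE.refl _)).elim
    · -- same stage
      cases b <;> cases b'
      · exact List.prefix_refl _
      · obtain ⟨h0A, h1A, l0, l1, hj, -⟩ := qqspec C k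
        exact absurd h (fun h => join_not_ub C hj h0A (TLE.refl _) (by simpa [nd] using h))
      · obtain ⟨h0A, h1A, l0, l1, hj, -⟩ := qqspec C k
        exact absurd h (fun h => join_not_ub C hj h1A (by simpa [nd] using h) (TLE.refl _))
      · exact List.prefix_refl _
    · -- newer node
      exact absurd h (nd_not_le_old C (nd_mem C hkn b))

end SplitPM

open SplitPM in
/-- For any splitting class `A` there is a p-morphism from the Kripke frame
`(A/≡_T, ≤_T)` onto the full infinite binary tree `2^{<ω}` (finite binary strings
ordered by the prefix relation). -/
theorem splitting_pmorphism (A : Set (ℕ → ℕ)) (hA : SplittingClass A) :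
    ∃ α : TDegrees A → List Bool,
      Function.Surjective α ∧
      (∀ x y : TDegrees A, qle A x y → α x <+: α y) ∧
      (∀ x : TDegrees A, ∀ τ : List Bool, α x <+: τ →
        ∃ y : TDegrees A, qle A x y ∧ α y = τ) := by
  classical
  obtain ⟨hne, hcnt, hdc, hsp⟩ := hA
  obtain ⟨F, hF⟩ := Set.Countable.exists_eq_range hcnt hne
  have hFA : ∀ n, F n ∈ A := fun n => hF ▸ Set.mem_range_self n
  have hsurj : ∀ f ∈ A, ∃ n, F n = f := fun f hf => by rw [hF] at hf; exact hf
  have hzer : zer ∈ A := by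
    obtain ⟨f₀, hf₀⟩ := hne
    exact hdc f₀ hf₀ _ (zer_le f₀)
  let C : Ctx := ⟨A, F, hFA, hsurj, hdc, hzer, hsp⟩
  let idx : {f : ℕ → ℕ // f ∈ A} → ℕ := fun x => Classical.choose (hsurj x.1 x.2)
  have hidx : ∀ x : {f : ℕ → ℕ // f ∈ A}, C.F (idx x) = x.1 :=
    fun x => Classical.choose_spec (hsurj x.1 x.2)
  let αs : {f : ℕ → ℕ // f ∈ A} → List Bool := fun x => sg C (idx x)
  have specA : ∀ x : {f : ℕ → ℕ // f ∈ A},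
      ∃ n, ∃ p ∈ S C n, TuringLE p.1 x.1 ∧ p.2 = αs x := by
    intro x
    obtain ⟨p, hp, hle, htag⟩ := sig_mem C (idx x)
    exact ⟨idx x, p, hp, hidx x ▸ hle, htag⟩
  have specB : ∀ x : {f : ℕ → ℕ // f ∈ A}, ∀ {p : Node} {n : ℕ},
      p ∈ S C n → TuringLE p.1 x.1 → p.2 <+: αs x := by
    intro x p n hp hle
    exact global_max C hp ((hidx x).symm ▸ hle)
  have compat : ∀ a b : {f : ℕ → ℕ // f ∈ A}, (turingSetoid A).r a b → αs a = αs b := by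
    intro a b hab
    obtain ⟨n1, p1, hp1, hle1, ht1⟩ := specA a
    obtain ⟨n2, p2, hp2, hle2, ht2⟩ := specA b
    have h1 : αs a <+: αs b := ht1 ▸ specB b hp1 (TLE.trans hle1 hab.1)
    have h2 : αs b <+: αs a := ht2 ▸ specB a hp2 (TLE.trans hle2 hab.2)
    exact h1.eq_of_length_le h2.length_le
  have onestep : ∀ (x : {f : ℕ → ℕ // f ∈ A}) (b : Bool), ∃ y : {f : ℕ → ℕ // f ∈ A},
      TuringLE x.1 y.1 ∧ αs y = αs x ++ [b] := by
    intro x b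
    have hy : (nd C (idx x) b).1 ∈ A := ndA C (idx x) b
    refine ⟨⟨_, hy⟩, hidx x ▸ F_le_nd C (idx x) b, ?_⟩
    have h1 : (sg C (idx x) ++ [b]) <+: αs ⟨_, hy⟩ :=
      specB ⟨_, hy⟩ (nd_mem C (Nat.lt_succ_self (idx x)) b) (TLE.refl _)
    have h2 : αs ⟨_, hy⟩ <+: sg C (idx x) ++ [b] := by
      obtain ⟨n', p, hp, hle, ht⟩ := specA ⟨_, hy⟩
      exact ht ▸ nd_max C hp hle
    exact h2.eq_of_length_le h1.length_le
  have back : ∀ (k : ℕ) (x : {f : ℕ → ℕ // f ∈ A}) (τ : List Bool), αs x <+: τ →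
      τ.length ≤ (αs x).length + k →
      ∃ y : {f : ℕ → ℕ // f ∈ A}, TuringLE x.1 y.1 ∧ αs y = τ := by
    intro k
    induction k with
    | zero =>
      intro x τ hpre hlen
      exact ⟨x, TLE.refl _, hpre.eq_of_length_le (by omega)⟩
    | succ k ih =>
      intro x τ hpre hlen
      obtain ⟨l, rfl⟩ := hpre
      cases l with
      | nil => exact ⟨x, TLE.refl _, by simp⟩
      | cons b l' =>
        obtain ⟨y1, hle1, hα1⟩ := onestep x b
        have hpre1 : αs y1 <+: αs x ++ b :: l' := by
          rw [hα1]
          exact ⟨l', by simp⟩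
        have hlen1 : (αs x ++ b :: l').length ≤ (αs y1).length + k := by
          rw [hα1]
          simp at hlen ⊢
          omega
        obtain ⟨y, hle, hα⟩ := ih y1 _ hpre1 hlen1
        exact ⟨y, TLE.trans hle1 hle, hα⟩
  have hroot : αs ⟨zer, hzer⟩ = [] := by
    obtain ⟨n, p, hp, hle, ht⟩ := specA ⟨zer, hzer⟩
    rcases mem_S_elim C hp with rfl | ⟨m, hm, b, rfl⟩
    · exact ht.symm
    · exact absurd (TLE.trans hle (zer_le (C.F m))) (nd_not_le_F_self C m b)
  refine ⟨Quotient.lift αs compat, ?_, ?_, ?_⟩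
  · intro τ
    obtain ⟨y, -, hy⟩ := back τ.length ⟨zer, hzer⟩ τ
      (by rw [hroot]; exact List.nil_prefix) (by rw [hroot]; simp)
    exact ⟨Quotient.mk (turingSetoid A) y, hy⟩
  · intro x y
    refine Quotient.inductionOn₂ x y ?_
    intro u v h
    have h' : TuringLE u.1 v.1 := h
    obtain ⟨n, p, hp, hle, ht⟩ := specA u
    show αs u <+: αs v
    exact ht ▸ specB v hp (TLE.trans hle h')
  · intro x τ
    refine Quotient.inductionOn x ?_
    intro u hpre
    obtain ⟨y, hle, hy⟩ := back τ.length u τ hpre (by omega)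
    exact ⟨Quotient.mk (turingSetoid A) y, hle, hy⟩
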